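/- Let T > 0, n a positive integer, ε = T/n, t_k = kε, τ(t) = t_k and τ̄(t) = t_{k+1} for t ∈ [t_k, t_{k+1}). Let i be a natural number, K ∈ {1,…,n}, and g : [0,T] → ℝ absolutely continuous with weak derivative g′. Then ∫₀^{t_K} (τ̄(t) − t)^i g(τ(t)) dt = (ε^i/(i+1)) ( ∫₀^{t_K} g(t) dt − ∫₀^{t_K} (τ̄(t) − t) g′(t) dt ). -/

import Mathlib

open MeasureTheory Set

lemma tri_fubini (a b : ℝ) (hab : a ≤ b) (f : ℝ → ℝ) (hf : IntegrableOn f (Ioc a b)) :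
    ∫ t in a..b, (∫ s in a..t, f s) = ∫ s in a..b, (b - s) * f s := by
  set μ := volume.restrict (Ioc a b) with hμ
  have hfin : μ (univ : Set ℝ) < ⊤ := by
    rw [hμ, Measure.restrict_apply_univ]
    exact measure_Ioc_lt_top
  have hone : Integrable (fun _ : ℝ => (1:ℝ)) μ := by
    refine integrable_const_iff.2 (Or.inr ?_)
    exact ⟨hfin⟩
  have hF : Integrable (fun p : ℝ × ℝ => f p.2) (μ.prod μ) := by
    have := hone.mul_prod hf
    simpa using this
  have hmeas : MeasurableSet {p : ℝ × ℝ | p.2 ≤ p.1} :=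
    measurableSet_le measurable_snd measurable_fst
  have hFind : Integrable (fun p : ℝ × ℝ => if p.2 ≤ p.1 then f p.2 else 0) (μ.prod μ) := by
    have := hF.indicator hmeas
    refine this.congr (Filter.Eventually.of_forall fun p => ?_)
    by_cases h : p.2 ≤ p.1 <;> simp [Set.indicator, h]
  have hswap := MeasureTheory.integral_integral_swap
    (f := fun t s : ℝ => if s ≤ t then f s else 0) hFind
  have hL : (∫ t, (∫ s, (if s ≤ t then f s else 0) ∂μ) ∂μ) = ∫ t in a..b, (∫ s in a..t, f s) := by
    rw [intervalIntegral.integral_of_le hab, hμ]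
    refine setIntegral_congr_fun measurableSet_Ioc fun t ht => ?_
    rw [intervalIntegral.integral_of_le ht.1.le]
    have : (fun s => if s ≤ t then f s else 0) = Set.indicator (Iic t) f := by
      funext s; by_cases h : s ≤ t <;> simp [Set.indicator, h]
    rw [this, integral_indicator measurableSet_Iic,
        Measure.restrict_restrict measurableSet_Iic]
    congr 1
    rw [Set.Iic_inter_Ioc_of_le ht.2]
  have hR : (∫ s, (∫ t, (if s ≤ t then f s else 0) ∂μ) ∂μ) = ∫ s in a..b, (b - s) * f s := by
    rw [intervalIntegral.integral_of_le hab, hμ]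
    refine setIntegral_congr_fun measurableSet_Ioc fun s hs => ?_
    have : (fun t => if s ≤ t then f s else 0) = Set.indicator (Ici s) (fun _ => f s) := by
      funext t; by_cases h : s ≤ t <;> simp [Set.indicator, h]
    rw [this, integral_indicator measurableSet_Ici,
        Measure.restrict_restrict measurableSet_Ici, setIntegral_const]
    have : Ici s ∩ Ioc a b = Icc s b := by
      ext x; constructor
      · rintro ⟨h1, _, h3⟩; exact ⟨h1, h3⟩
      · rintro ⟨h1, h2⟩; exact ⟨h1, lt_of_lt_of_le hs.1 h1, h2⟩
    rw [this, measureReal_def, Real.volume_Icc, ENNReal.toReal_ofReal (by linarith [hs.2])]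
    simp [smul_eq_mul]
  rw [← hL, ← hR]
  exact hswap

theorem stmt_9 (T : ℝ) (hT : 0 < T) (n : ℕ) (hn : 0 < n) (ε : ℝ) (hε : ε = T / n)
    (τ τ' : ℝ → ℝ)
    (hτ : ∀ k : ℕ, k < n → ∀ t ∈ Ico ((k:ℝ)*ε) (((k:ℝ)+1)*ε), τ t = (k:ℝ)*ε)
    (hτ' : ∀ k : ℕ, k < n → ∀ t ∈ Ico ((k:ℝ)*ε) (((k:ℝ)+1)*ε), τ' t = ((k:ℝ)+1)*ε)
    (i : ℕ) (g g' : ℝ → ℝ) (hg' : IntervalIntegrable g' volume 0 T)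
    (hg : ∀ t ∈ Icc (0:ℝ) T, g t = g 0 + ∫ s in (0:ℝ)..t, g' s) :
    ∀ K : ℕ, 1 ≤ K → K ≤ n →
      ∫ t in (0:ℝ)..((K:ℝ)*ε), (τ' t - t)^i * g (τ t)
        = (ε^i/((i:ℝ)+1)) *
          ((∫ t in (0:ℝ)..((K:ℝ)*ε), g t)
            - ∫ t in (0:ℝ)..((K:ℝ)*ε), (τ' t - t) * g' t) := by
  intro K hK1 hKn
  have hε0 : 0 < ε := by rw [hε]; positivity
  have hnε : (n:ℝ) * ε = T := by rw [hε]; field_simp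
  set a : ℕ → ℝ := fun k => (k:ℝ) * ε with ha
  have ha0 : a 0 = 0 := by simp [ha]
  have hamono : ∀ k : ℕ, a k ≤ a (k+1) := by
    intro k; simp only [ha]; push_cast; nlinarith
  have haT : ∀ k : ℕ, k ≤ n → a k ≤ T := by
    intro k hk
    have h1 : (k:ℝ) ≤ (n:ℝ) := by exact_mod_cast hk
    rw [ha, ← hnε]
    exact mul_le_mul_of_nonneg_right h1 hε0.le
  have hapos : ∀ k : ℕ, 0 ≤ a k := by
    intro k; simp only [ha]; positivity
  have haB : ∀ k : ℕ, ((k:ℝ)+1)*ε = a (k+1) := by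
    intro k; simp only [ha]; push_cast; ring
  have haA : ∀ k : ℕ, (k:ℝ)*ε = a k := by intro k; simp only [ha]
  have hBA : ∀ k : ℕ, a (k+1) - a k = ε := by
    intro k; simp only [ha]; push_cast; ring
  -- integrability of g' on subintervals
  have hg'sub : ∀ k : ℕ, k < n → IntervalIntegrable g' volume (a k) (a (k+1)) := by
    intro k hk
    refine hg'.mono_set ?_
    rw [uIcc_of_le (hamono k), uIcc_of_le hT.le]
    exact Icc_subset_Icc (hapos k) (haT (k+1) hk)
  have hg'0k : ∀ k : ℕ, k ≤ n → IntervalIntegrable g' volume 0 (a k) := by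
    intro k hk
    refine hg'.mono_set ?_
    rw [uIcc_of_le (hapos k), uIcc_of_le hT.le]
    exact Icc_subset_Icc le_rfl (haT k hk)
  -- a.e. membership in Ico
  have hbne : ∀ b : ℝ, ∀ᵐ t : ℝ, t ≠ b := by
    intro b
    rw [ae_iff]
    have : {t : ℝ | ¬ t ≠ b} = {b} := by ext x; simp
    rw [this]
    exact measure_singleton b
  have hIcoae : ∀ k : ℕ, ∀ᵐ t : ℝ, t ∈ Ioc (a k) (a (k+1)) →
      t ∈ Ico ((k:ℝ)*ε) (((k:ℝ)+1)*ε) := by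
    intro k
    filter_upwards [hbne (a (k+1))] with t htne ht
    rw [haB k, haA k]
    exact ⟨ht.1.le, lt_of_le_of_ne ht.2 htne⟩
  -- a.e. congruences for the two τ-integrands
  have hcong1 : ∀ k : ℕ, k < n → ∀ᵐ t : ℝ, t ∈ Ioc (a k) (a (k+1)) →
      (τ' t - t)^i * g (τ t) = (a (k+1) - t)^i * g (a k) := by
    intro k hk
    filter_upwards [hIcoae k] with t hmem ht
    have h2 := hmem ht
    rw [hτ k hk t h2, hτ' k hk t h2, haB k, haA k]
  have hcong3 : ∀ k : ℕ, k < n → ∀ᵐ t : ℝ, t ∈ Ioc (a k) (a (k+1)) →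
      (τ' t - t) * g' t = (a (k+1) - t) * g' t := by
    intro k hk
    filter_upwards [hIcoae k] with t hmem ht
    have h2 := hmem ht
    rw [hτ' k hk t h2, haB k]
  -- g equals its primitive on each subinterval
  have hgab : ∀ k : ℕ, k < n → ∀ t ∈ Ioc (a k) (a (k+1)),
      g t = g (a k) + ∫ s in (a k)..t, g' s := by
    intro k hk t ht
    have htT : t ∈ Icc (0:ℝ) T := ⟨le_trans (hapos k) ht.1.le, le_trans ht.2 (haT (k+1) hk)⟩
    have hakT : a k ∈ Icc (0:ℝ) T := ⟨hapos k, haT k hk.le⟩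
    rw [hg t htT, hg (a k) hakT]
    have hsplit : (∫ s in (0:ℝ)..(a k), g' s) + (∫ s in (a k)..t, g' s)
        = ∫ s in (0:ℝ)..t, g' s := by
      refine intervalIntegral.integral_add_adjacent_intervals (hg'0k k hk.le) ?_
      refine hg'.mono_set ?_
      rw [uIcc_of_le ht.1.le, uIcc_of_le hT.le]
      exact Icc_subset_Icc (hapos k) htT.2
    rw [← hsplit]; ring
  -- primitive is interval integrable
  have hprim : ∀ k : ℕ, k < n →
      IntervalIntegrable (fun t => ∫ s in (a k)..t, g' s) volume (a k) (a (k+1)) := by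
    intro k hk
    have h1 : IntegrableOn g' (uIcc (a k) (a (k+1))) := by
      rw [uIcc_of_le (hamono k)]
      exact (intervalIntegrable_iff_integrableOn_Icc_of_le (hamono k)).1 (hg'sub k hk)
    exact (intervalIntegral.continuousOn_primitive_interval h1).intervalIntegrable
  -- interval integrability of the three integrands
  have hf1int : ∀ k : ℕ, k < n →
      IntervalIntegrable (fun t => (τ' t - t)^i * g (τ t)) volume (a k) (a (k+1)) := by
    intro k hk
    have hc : IntervalIntegrable (fun t => (a (k+1) - t)^i * g (a k)) volume (a k) (a (k+1)) :=
      (((continuous_const.sub continuous_id).pow i).mul continuous_const).intervalIntegrable _ _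
    rw [intervalIntegrable_iff_integrableOn_Ioc_of_le (hamono k)] at hc ⊢
    exact hc.congr ((ae_restrict_iff' measurableSet_Ioc).2
      ((hcong1 k hk).mono fun t h ht => (h ht).symm))
  have hgint : ∀ k : ℕ, k < n → IntervalIntegrable g volume (a k) (a (k+1)) := by
    intro k hk
    have hc : IntervalIntegrable (fun t => g (a k) + ∫ s in (a k)..t, g' s)
        volume (a k) (a (k+1)) := (intervalIntegrable_const).add (hprim k hk)
    rw [intervalIntegrable_iff_integrableOn_Ioc_of_le (hamono k)] at hc ⊢
    exact hc.congr_fun (fun t ht => (hgab k hk t ht).symm) measurableSet_Ioc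
  have hf3int : ∀ k : ℕ, k < n →
      IntervalIntegrable (fun t => (τ' t - t) * g' t) volume (a k) (a (k+1)) := by
    intro k hk
    have hc : IntervalIntegrable (fun t => (a (k+1) - t) * g' t) volume (a k) (a (k+1)) :=
      (hg'sub k hk).continuousOn_mul (continuous_const.sub continuous_id).continuousOn
    rw [intervalIntegrable_iff_integrableOn_Ioc_of_le (hamono k)] at hc ⊢
    exact hc.congr ((ae_restrict_iff' measurableSet_Ioc).2
      ((hcong3 k hk).mono fun t h ht => (h ht).symm))
  -- the per-interval identity
  have key : ∀ k : ℕ, k < n →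
      (∫ t in (a k)..(a (k+1)), (τ' t - t)^i * g (τ t))
        = (ε^i/((i:ℝ)+1)) *
          ((∫ t in (a k)..(a (k+1)), g t)
            - ∫ t in (a k)..(a (k+1)), (τ' t - t) * g' t) := by
    intro k hk
    have hAB := hamono k
    -- I1
    have I1 : (∫ t in (a k)..(a (k+1)), (τ' t - t)^i * g (τ t))
        = (ε^(i+1)/((i:ℝ)+1)) * g (a k) := by
      have step1 : (∫ t in (a k)..(a (k+1)), (τ' t - t)^i * g (τ t))
          = ∫ t in (a k)..(a (k+1)), (a (k+1) - t)^i * g (a k) := by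
        refine intervalIntegral.integral_congr_ae ?_
        rw [uIoc_of_le hAB]
        exact hcong1 k hk
      rw [step1, intervalIntegral.integral_mul_const]
      have step2 : (∫ t in (a k)..(a (k+1)), (a (k+1) - t)^i) = ε^(i+1)/((i:ℝ)+1) := by
        rw [intervalIntegral.integral_comp_sub_left (fun x => x^i) (a (k+1))]
        rw [sub_self, hBA k, integral_pow]
        push_cast
        simp
      rw [step2]
    -- I2
    have I2 : (∫ t in (a k)..(a (k+1)), g t)
        = ε * g (a k) + ∫ s in (a k)..(a (k+1)), (a (k+1) - s) * g' s := by
      have e1 : ∫ t in Ioc (a k) (a (k+1)), g t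
          = ∫ t in Ioc (a k) (a (k+1)), (g (a k) + ∫ s in (a k)..t, g' s) :=
        setIntegral_congr_fun measurableSet_Ioc (fun t ht => hgab k hk t ht)
      rw [intervalIntegral.integral_of_le hAB, e1, ← intervalIntegral.integral_of_le hAB]
      rw [intervalIntegral.integral_add intervalIntegrable_const (hprim k hk),
        intervalIntegral.integral_const, hBA k, smul_eq_mul]
      congr 1
      exact tri_fubini (a k) (a (k+1)) hAB g'
        ((intervalIntegrable_iff_integrableOn_Ioc_of_le hAB).1 (hg'sub k hk))
    -- I3
    have I3 : (∫ t in (a k)..(a (k+1)), (τ' t - t) * g' t)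
        = ∫ t in (a k)..(a (k+1)), (a (k+1) - t) * g' t := by
      refine intervalIntegral.integral_congr_ae ?_
      rw [uIoc_of_le hAB]
      exact hcong3 k hk
    rw [I1, I2, I3]
    have : ((i:ℝ)+1) ≠ 0 := by positivity
    field_simp
    ring
  -- summing up
  have hs1 := intervalIntegral.sum_integral_adjacent_intervals
    (a := a) (n := K) (f := fun t => (τ' t - t)^i * g (τ t))
    (fun k hk => hf1int k (lt_of_lt_of_le hk hKn))
  have hs2 := intervalIntegral.sum_integral_adjacent_intervals
    (a := a) (n := K) (f := g) (fun k hk => hgint k (lt_of_lt_of_le hk hKn))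
  have hs3 := intervalIntegral.sum_integral_adjacent_intervals
    (a := a) (n := K) (f := fun t => (τ' t - t) * g' t)
    (fun k hk => hf3int k (lt_of_lt_of_le hk hKn))
  rw [ha0] at hs1 hs2 hs3
  rw [haA K] at *
  rw [← hs1, ← hs2, ← hs3]
  calc ∑ k ∈ Finset.range K, ∫ t in (a k)..(a (k+1)), (τ' t - t)^i * g (τ t)
      = ∑ k ∈ Finset.range K, (ε^i/((i:ℝ)+1)) *
          ((∫ t in (a k)..(a (k+1)), g t)
            - ∫ t in (a k)..(a (k+1)), (τ' t - t) * g' t) :=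
        Finset.sum_congr rfl (fun k hk => key k (lt_of_lt_of_le (Finset.mem_range.1 hk) hKn))
    _ = (ε^i/((i:ℝ)+1)) *
          ((∑ k ∈ Finset.range K, ∫ t in (a k)..(a (k+1)), g t)
            - ∑ k ∈ Finset.range K, ∫ t in (a k)..(a (k+1)), (τ' t - t) * g' t) := by
        rw [← Finset.mul_sum, Finset.sum_sub_distrib]
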